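/- The ℂ-linear span of the set of pure wedges (e_1 + φ(e_1)) ∧ (e_2 + φ(e_2)) ∧ ⋯ ∧ (e_d + φ(e_d)), where φ ranges over all ℂ-linear maps from V_d to V_{n−d}, is the entire space Λ^d ℂ^n. -/

import Mathlib

/-- The `i`-th standard basis vector of `ℂ^n`. -/
noncomputable def ee (n : ℕ) (i : Fin n) : Fin n → ℂ := Pi.single i 1

/-- `V_d`: the span of the first `d` standard basis vectors. -/
noncomputable def Vlow (n d : ℕ) : Submodule ℂ (Fin n → ℂ) :=
  Submodule.span ℂ {v | ∃ i : Fin n, i.val < d ∧ v = ee n i}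

/-- `V_{n-d}`: the span of the last `n - d` standard basis vectors. -/
noncomputable def Vhigh (n d : ℕ) : Submodule ℂ (Fin n → ℂ) :=
  Submodule.span ℂ {v | ∃ i : Fin n, d ≤ i.val ∧ v = ee n i}

section aux

variable (n d : ℕ) (h : d ≤ n)

/-- The generating set. -/
def gens : Set (ExteriorAlgebra ℂ (Fin n → ℂ)) :=
  {w | ∃ φ : (Fin n → ℂ) →ₗ[ℂ] (Fin n → ℂ), (∀ v ∈ Vlow n d, φ v ∈ Vhigh n d) ∧
      w = ExteriorAlgebra.ιMulti ℂ d fun k : Fin d =>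
        ee n (Fin.castLE h k) + φ (ee n (Fin.castLE h k))}

/-- lower basis vectors, indexed by `Fin d`. -/
noncomputable def eLow : Fin d → (Fin n → ℂ) := fun k => ee n (Fin.castLE h k)

lemma ee_high_mem {j : Fin n} (hj : d ≤ j.val) : ee n j ∈ Vhigh n d :=
  Submodule.subset_span ⟨j, hj, rfl⟩

lemma gen_mem (w : Fin d → (Fin n → ℂ)) (hw : ∀ k, w k ∈ Vhigh n d) :
    ExteriorAlgebra.ιMulti ℂ d (fun k => eLow n d h k + w k) ∈ gens n d h := by
  classical
  refine ⟨∑ k : Fin d,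
      (LinearMap.proj (Fin.castLE h k) : (Fin n → ℂ) →ₗ[ℂ] ℂ).smulRight (w k), ?_, ?_⟩
  · intro v _
    simp only [LinearMap.sum_apply, LinearMap.smulRight_apply, LinearMap.proj_apply]
    exact Submodule.sum_mem _ fun k _ => Submodule.smul_mem _ _ (hw k)
  · congr 1
    funext k
    congr 1
    simp only [LinearMap.sum_apply, LinearMap.smulRight_apply, LinearMap.proj_apply]
    rw [Finset.sum_eq_single k]
    · simp [ee, eLow]
    · intro b _ hb
      have hne : (Fin.castLE h b) ≠ (Fin.castLE h k) := by
        simpa using fun e => hb (Fin.castLE_injective h e)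
      simp [ee, Pi.single_eq_of_ne hne]
    · simp

end aux

section aux2
variable (n d : ℕ) (h : d ≤ n)

lemma piecewise_mem (u : Fin d → (Fin n → ℂ)) :
    ∀ (C : Finset (Fin d)), (∀ k ∈ C, u k ∈ Vhigh n d) →
    ExteriorAlgebra.ιMulti ℂ d (C.piecewise u (eLow n d h)) ∈
      Submodule.span ℂ (gens n d h) := by
  classical
  intro C
  induction C using Finset.strongInduction with
  | _ C ih =>
    intro hu
    set f := ExteriorAlgebra.ιMulti ℂ d (M := Fin n → ℂ) with hf
    set w : Fin d → (Fin n → ℂ) := C.piecewise u 0 with hwdef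
    have hw : ∀ k, w k ∈ Vhigh n d := by
      intro k
      by_cases hk : k ∈ C
      · simpa [hwdef, Finset.piecewise_eq_of_mem _ _ _ hk] using hu k hk
      · simp [hwdef, Finset.piecewise_eq_of_notMem _ _ _ hk]
    have hgen : f (fun k => eLow n d h k + w k) ∈ Submodule.span ℂ (gens n d h) :=
      Submodule.subset_span (gen_mem n d h w hw)
    have hkey : f (fun k => eLow n d h k + w k)
        = ∑ s ∈ C.powerset, f (s.piecewise u (eLow n d h)) := by
      have h1 : (fun k => eLow n d h k + w k) = w + eLow n d h := by
        funext k; simp [add_comm]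
      have h2 := f.toMultilinearMap.map_add_univ w (eLow n d h)
      simp only [AlternatingMap.coe_multilinearMap] at h2
      rw [h1, h2]
      rw [← Finset.sum_subset (Finset.subset_univ C.powerset)]
      · refine Finset.sum_congr rfl fun s hs => ?_
        congr 1
        funext k
        by_cases hk : k ∈ s
        · simp [Finset.piecewise_eq_of_mem _ _ _ hk, hwdef,
            Finset.piecewise_eq_of_mem _ _ _ (Finset.mem_powerset.1 hs hk)]
        · simp [Finset.piecewise_eq_of_notMem _ _ _ hk]
      · intro s _ hs
        rw [Finset.mem_powerset] at hs
        obtain ⟨k, hks, hkC⟩ := Finset.not_subset.1 hs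
        apply f.map_coord_zero k
        simp [Finset.piecewise_eq_of_mem _ _ _ hks, hwdef,
          Finset.piecewise_eq_of_notMem _ _ _ hkC]
    have h3 : f (C.piecewise u (eLow n d h))
          + ∑ s ∈ C.powerset.erase C, f (s.piecewise u (eLow n d h))
        = ∑ s ∈ C.powerset, f (s.piecewise u (eLow n d h)) :=
      by rw [Finset.add_sum_erase _ (fun s => f (s.piecewise u (eLow n d h)))
        (Finset.mem_powerset_self C)]
    have hsplit := eq_sub_of_add_eq (h3.trans hkey.symm)
    rw [hsplit]
    refine Submodule.sub_mem _ hgen (Submodule.sum_mem _ fun s hs => ?_)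
    have hs' : s ⊂ C := by
      rw [Finset.mem_erase, Finset.mem_powerset] at hs
      exact Finset.ssubset_iff_subset_ne.2 ⟨hs.2, hs.1⟩
    exact ih s hs' fun k hk => hu k (hs'.1 hk)

end aux2

section aux3
variable (n d : ℕ) (h : d ≤ n)

lemma basis_mem (i : Fin d → Fin n) :
    ExteriorAlgebra.ιMulti ℂ d (fun k => ee n (i k)) ∈ Submodule.span ℂ (gens n d h) := by
  classical
  set f := ExteriorAlgebra.ιMulti ℂ d (M := Fin n → ℂ) with hf
  by_cases hinj : Function.Injective i
  · set T : Finset (Fin d) :=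
      Finset.univ.filter (fun t => ∃ k, i k = Fin.castLE h t) with hT
    have hmap : ∀ k : {k : Fin d // (i k).val < d},
        (⟨(i k.1).val, k.2⟩ : Fin d) ∈ T := by
      intro k
      simp only [hT, Finset.mem_filter, Finset.mem_univ, true_and]
      exact ⟨k.1, Fin.ext rfl⟩
    have hbij : Function.Bijective (fun k : {k : Fin d // (i k).val < d} =>
        (⟨⟨(i k.1).val, k.2⟩, hmap k⟩ : {t : Fin d // t ∈ T})) := by
      constructor
      · intro a b hab
        have : (i a.1).val = (i b.1).val := by
          simpa [Subtype.ext_iff, Fin.ext_iff] using hab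
        exact Subtype.ext (hinj (Fin.ext this))
      · rintro ⟨t, ht⟩
        simp only [hT, Finset.mem_filter, Finset.mem_univ, true_and] at ht
        obtain ⟨k, hk⟩ := ht
        have hkd : (i k).val < d := by rw [hk]; exact t.2
        exact ⟨⟨k, hkd⟩, Subtype.ext (Fin.ext (by simp [hk]))⟩
    set e := Equiv.ofBijective _ hbij with he
    set σ : Equiv.Perm (Fin d) := e.symm.extendSubtype with hσ
    have key1 : ∀ t (ht : t ∈ T), i (σ t) = Fin.castLE h t := by
      intro t ht
      have h1 : σ t = (e.symm ⟨t, ht⟩ : {k : Fin d // (i k).val < d}).1 :=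
        Equiv.extendSubtype_apply_of_mem e.symm t ht
      have h2 : e (e.symm ⟨t, ht⟩) = ⟨t, ht⟩ := e.apply_symm_apply _
      have h3 : ((e (e.symm ⟨t, ht⟩) : {t : Fin d // t ∈ T}).1).val
          = (i (e.symm ⟨t, ht⟩ : {k : Fin d // (i k).val < d}).1).val := rfl
      rw [h2] at h3
      rw [h1]
      exact Fin.ext h3.symm
    have key2 : ∀ t, t ∉ T → d ≤ (i (σ t)).val := by
      intro t ht
      have h4 := Equiv.extendSubtype_not_mem e.symm t ht
      rw [← hσ] at h4
      omega
    set u : Fin d → (Fin n → ℂ) := fun t => ee n (i (σ t)) with hu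
    set C : Finset (Fin d) := Tᶜ with hC
    have hfun : ((fun k => ee n (i k)) ∘ σ) = C.piecewise u (eLow n d h) := by
      funext t
      by_cases ht : t ∈ T
      · have htC : t ∉ C := by simp [hC, ht]
        simp only [Function.comp_apply, Finset.piecewise_eq_of_notMem _ _ _ htC]
        rw [eLow, ← key1 t ht]
      · have htC : t ∈ C := by simp [hC, ht]
        simp [Function.comp_apply, Finset.piecewise_eq_of_mem _ _ _ htC, hu]
    have hmemσ : f ((fun k => ee n (i k)) ∘ σ) ∈ Submodule.span ℂ (gens n d h) := by
      rw [hfun]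
      exact piecewise_mem n d h u C fun t ht =>
        ee_high_mem n d (key2 t (by simpa [hC] using ht))
    have hperm := f.map_perm (fun k => ee n (i k)) σ
    rcases Int.units_eq_one_or (Equiv.Perm.sign σ) with hs | hs
    · rw [hs, one_smul] at hperm
      rwa [hperm] at hmemσ
    · rw [hs] at hperm
      have : f (fun k => ee n (i k)) = - f ((fun k => ee n (i k)) ∘ σ) := by
        rw [hperm]; simp
      rw [this]
      exact Submodule.neg_mem _ hmemσ
  · have hvinj : ¬ Function.Injective (fun k => ee n (i k)) := by
      intro hcon
      apply hinj
      intro a b hab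
      apply hcon
      simp only [ee, hab]
    rw [f.map_eq_zero_of_not_injective _ hvinj]
    exact Submodule.zero_mem _

end aux3

theorem stmt3 (n d : ℕ) (hd1 : 1 ≤ d) (hdn : d ≤ n - d) :
    Submodule.span ℂ {w : ExteriorAlgebra ℂ (Fin n → ℂ) |
        ∃ φ : (Fin n → ℂ) →ₗ[ℂ] (Fin n → ℂ), (∀ v ∈ Vlow n d, φ v ∈ Vhigh n d) ∧
          w = ExteriorAlgebra.ιMulti ℂ d fun k : Fin d =>
            ee n (Fin.castLE (by omega) k) + φ (ee n (Fin.castLE (by omega) k))} =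
      ⋀[ℂ]^d (Fin n → ℂ) := by
  classical
  have h : d ≤ n := by omega
  apply le_antisymm
  · rw [← ExteriorAlgebra.ιMulti_span_fixedDegree]
    apply Submodule.span_mono
    rintro w ⟨φ, hφ, rfl⟩
    exact ⟨_, rfl⟩
  · rw [← ExteriorAlgebra.ιMulti_span_fixedDegree, Submodule.span_le]
    rintro w ⟨v, rfl⟩
    set f := ExteriorAlgebra.ιMulti ℂ d (M := Fin n → ℂ) with hf
    have hv : v = fun k => ∑ j : Fin n, v k j • ee n j := by
      funext k
      have h1 : ∀ j : Fin n, v k j • ee n j = Pi.single j (v k j) := by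
        intro j
        simp [ee, ← Pi.single_smul]
      simp_rw [h1]
      exact (Finset.univ_sum_single (v k)).symm
    have e1 : f v
        = ∑ r : Fin d → Fin n, (∏ k, v k (r k)) • f (fun k => ee n (r k)) := by
      conv_lhs => rw [hv]
      have h2 := f.toMultilinearMap.map_sum (g := fun k j => v k j • ee n j)
      simp only [AlternatingMap.coe_multilinearMap] at h2
      rw [h2]
      refine Finset.sum_congr rfl fun r _ => ?_
      have h3 := f.toMultilinearMap.map_smul_univ (fun k => v k (r k))
        (fun k => ee n (r k))
      simpa using h3
    show f v ∈ _
    rw [e1]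
    exact Submodule.sum_mem _ fun r _ =>
      Submodule.smul_mem _ _ (basis_mem n d h r)
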